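/- In a meet-tree, for any finite nonempty subset X and any element x ∈ X, the infimum of X equals min{x ⊓ y : y ∈ X}; in particular finite nonempty subsets of a meet-tree have an infimum. -/

import Mathlib

/-- In a meet-tree, any finite nonempty subset `X` has an infimum, and for any
`x ∈ X` the infimum of `X` is the minimum of the chain `{x ⊓ y : y ∈ X}`. -/
theorem finite_inf_eq_min {T : Type*} [SemilatticeInf T]
    (hsl : ∀ a : T, IsChain (· ≤ ·) {x : T | x < a})
    (X : Set T) (hX : X.Finite) (hne : X.Nonempty) (x : T) (hx : x ∈ X) :
    ∃ m : T, IsLeast ((fun y => x ⊓ y) '' X) m ∧ IsGLB X m := by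
  set S := (fun y => x ⊓ y) '' X with hS
  have hchain : IsChain (· ≤ ·) S := by
    rintro _ ⟨a, ha, rfl⟩ _ ⟨b, hb, rfl⟩ hne'
    dsimp only
    rcases eq_or_lt_of_le (inf_le_left : x ⊓ a ≤ x) with h1 | h1
    · right; rw [h1]; exact inf_le_left
    rcases eq_or_lt_of_le (inf_le_left : x ⊓ b ≤ x) with h2 | h2
    · left; rw [h2]; exact inf_le_left
    exact hsl x h1 h2 hne'
  have hfin : S.Finite := hX.image _
  have hne' : S.Nonempty := hne.image _
  obtain ⟨m, hmS, hmin⟩ := hfin.exists_minimal hne'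
  have hleast : IsLeast S m := by
    refine ⟨hmS, fun a haS => ?_⟩
    rcases eq_or_ne a m with rfl | hne''
    · exact le_rfl
    rcases hchain hmS haS (Ne.symm hne'') with h | h
    · exact h
    · exact hmin haS h
  refine ⟨m, hleast, ?_, ?_⟩
  · intro y hy
    exact le_trans (hleast.2 ⟨y, hy, rfl⟩) inf_le_right
  · intro b hb
    obtain ⟨y₀, hy₀, rfl⟩ := hmS
    exact le_inf (hb hx) (hb hy₀)
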